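/- Let X be a locally compact Hausdorff space, w : X → 𝕂 a bounded continuous weight function, and f : X → X a continuous map such that f⁻¹(K) ∩ X_ε is compact for every ε > 0 and every compact K ⊆ X, where X_ε := {x ∈ X : |w(x)| ≥ ε} (so that the weighted composition operator C_{w,f} is a bounded linear operator on C₀(X)). Then C_{w,f} is Li-Yorke chaotic if and only if there exists a sequence (B_i)_{i∈ℕ} of relatively compact open subsets of X such that: (A) there is an increasing sequence (n_j)_{j∈ℕ} of positive integers with lim_{j→∞} ‖w^{(n_j)}‖_{f^{-n_j}(B_i)} = 0 for all i ∈ ℕ; and (B) sup{ ‖w^{(n)}‖_{f^{-n}(B_i)} : i, n ∈ ℕ } = ∞. -/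

import Mathlib

open Filter Topology MeasureTheory ENNReal

noncomputable section
set_option linter.unusedSectionVars false
set_option linter.unusedVariables false

def LiYorkePair {M : Type*} [PseudoMetricSpace M] (g : M → M) (x y : M) : Prop :=
  Filter.liminf (fun n : ℕ => edist (g^[n] x) (g^[n] y)) Filter.atTop = 0 ∧
  0 < Filter.limsup (fun n : ℕ => edist (g^[n] x) (g^[n] y)) Filter.atTop

def LiYorkeChaotic {M : Type*} [PseudoMetricSpace M] (g : M → M) : Prop :=
  ∃ S : Set M, ¬ S.Countable ∧ S.Pairwise (LiYorkePair g)

def DenselyLiYorkeChaotic {M : Type*} [PseudoMetricSpace M] (g : M → M) : Prop :=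
  ∃ S : Set M, Dense S ∧ ¬ S.Countable ∧ S.Pairwise (LiYorkePair g)

namespace WCLY

lemma ofReal_norm_eq_coe_nnnorm {E : Type*} [SeminormedAddCommGroup E] (a : E) :
    ENNReal.ofReal ‖a‖ = (‖a‖₊ : ℝ≥0∞) := ofReal_norm a

lemma edist_eq_coe_nnnorm_sub {E : Type*} [SeminormedAddCommGroup E] (a b : E) :
    edist a b = (‖a - b‖₊ : ℝ≥0∞) := edist_eq_enorm_sub a b

variable {𝕂 : Type} [RCLike 𝕂] {X : Type} [TopologicalSpace X]

/-- product of weights along the orbit -/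
def wn (w : X → 𝕂) (f : X → X) (n : ℕ) (x : X) : 𝕂 :=
  ∏ t ∈ Finset.range n, w (f^[t] x)

variable {w : X → 𝕂} {f : X → X}

lemma wn_zero (x : X) : wn w f 0 x = 1 := by simp [wn]

lemma wn_succ_left (n : ℕ) (x : X) :
    wn w f (n + 1) x = wn w f n (f x) * w x := by
  rw [wn, Finset.prod_range_succ']
  simp [wn, Function.iterate_succ_apply]

lemma wn_add (a b : ℕ) (x : X) :
    wn w f (a + b) x = wn w f a x * wn w f b (f^[a] x) := by
  rw [wn, Finset.prod_range_add]
  congr 1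
  refine Finset.prod_congr rfl fun t _ => ?_
  rw [← Function.iterate_add_apply, Nat.add_comm]

lemma wn_continuous (hwc : Continuous w) (hfc : Continuous f) (n : ℕ) :
    Continuous (wn w f n) := by
  refine continuous_finset_prod _ fun t _ => hwc.comp ?_
  exact hfc.iterate t

lemma norm_wn_le {C : ℝ} (hC : ∀ x, ‖w x‖ ≤ C) (hC0 : 0 ≤ C) (n : ℕ) (x : X) :
    ‖wn w f n x‖ ≤ C ^ n := by
  rw [wn, norm_prod]
  calc ∏ t ∈ Finset.range n, ‖w (f^[t] x)‖ ≤ ∏ _t ∈ Finset.range n, C :=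
        Finset.prod_le_prod (fun _ _ => norm_nonneg _) (fun t _ => hC _)
    _ = C ^ n := by simp

variable (T : ZeroAtInftyContinuousMap X 𝕂 → ZeroAtInftyContinuousMap X 𝕂)

lemma iter_apply (hT : ∀ φ x, T φ x = φ (f x) * w x) :
    ∀ (n : ℕ) (φ : ZeroAtInftyContinuousMap X 𝕂) (x : X),
      (T^[n] φ) x = φ (f^[n] x) * wn w f n x := by
  intro n
  induction n with
  | zero => intro φ x; simp [wn_zero]
  | succ n ih =>
      intro φ x
      rw [Function.iterate_succ_apply', hT, ih, wn_succ_left,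
        Function.iterate_succ_apply]
      ring

lemma apply_le_norm (φ : ZeroAtInftyContinuousMap X 𝕂) (x : X) : ‖φ x‖ ≤ ‖φ‖ := by
  rw [← ZeroAtInftyContinuousMap.norm_toBCF_eq_norm]
  exact φ.toBCF.norm_coe_le_norm x

lemma norm_le_of {φ : ZeroAtInftyContinuousMap X 𝕂} {M : ℝ} (hM : 0 ≤ M)
    (h : ∀ x, ‖φ x‖ ≤ M) : ‖φ‖ ≤ M := by
  rw [← ZeroAtInftyContinuousMap.norm_toBCF_eq_norm]
  exact (BoundedContinuousFunction.norm_le hM).2 h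

lemma exists_gt_of_lt_norm {φ : ZeroAtInftyContinuousMap X 𝕂} {M : ℝ} (hM : 0 ≤ M)
    (h : M < ‖φ‖) : ∃ x, M < ‖φ x‖ := by
  by_contra hc
  push_neg at hc
  exact absurd (norm_le_of hM hc) (not_le.2 h)


lemma c0_norm_smul (c : 𝕂) (ψ : ZeroAtInftyContinuousMap X 𝕂) :
    ‖c • ψ‖ = ‖c‖ * ‖ψ‖ := by
  rcases eq_or_ne c 0 with rfl | hc
  · have : (0 : 𝕂) • ψ = 0 := by ext z; simp
    simp [this]
  · refine le_antisymm ?_ ?_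
    · refine norm_le_of (by positivity) fun z => ?_
      rw [ZeroAtInftyContinuousMap.smul_apply, smul_eq_mul, norm_mul]
      exact mul_le_mul_of_nonneg_left (apply_le_norm _ _) (norm_nonneg _)
    · have hle : ‖ψ‖ ≤ ‖c‖⁻¹ * ‖c • ψ‖ := by
        refine norm_le_of (by positivity) fun z => ?_
        have : ψ z = c⁻¹ * (c • ψ) z := by
          rw [ZeroAtInftyContinuousMap.smul_apply, smul_eq_mul, ← mul_assoc,
            inv_mul_cancel₀ hc, one_mul]
        rw [this, norm_mul, norm_inv]
        exact mul_le_mul_of_nonneg_left (apply_le_norm _ _) (by positivity)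
      have hcpos : 0 < ‖c‖ := norm_pos_iff.2 hc
      calc ‖c‖ * ‖ψ‖ ≤ ‖c‖ * (‖c‖⁻¹ * ‖c • ψ‖) :=
            mul_le_mul_of_nonneg_left hle (norm_nonneg _)
        _ = ‖c • ψ‖ := by field_simp

lemma isCompact_le_norm (φ : ZeroAtInftyContinuousMap X 𝕂) {ε : ℝ} (hε : 0 < ε) :
    IsCompact {x | ε ≤ ‖φ x‖} := by
  have h0 := ZeroAtInftyContinuousMap.zero_at_infty' φ
  have hb : Metric.ball (0 : 𝕂) ε ∈ 𝓝 (0 : 𝕂) := Metric.ball_mem_nhds _ hε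
  have hmem : φ.toFun ⁻¹' Metric.ball (0:𝕂) ε ∈ cocompact X := h0 hb
  rw [mem_cocompact] at hmem
  obtain ⟨K, hK, hKsub⟩ := hmem
  have hclosed : IsClosed {x | ε ≤ ‖φ x‖} :=
    isClosed_le continuous_const ((map_continuous φ).norm)
  refine hK.of_isClosed_subset hclosed fun x hx => ?_
  by_contra hxK
  have := hKsub hxK
  simp only [Set.mem_preimage, Metric.mem_ball, dist_zero_right] at this
  exact absurd hx (by simp only [Set.mem_setOf_eq, not_le]; exact this)

section Op
variable {𝕂 : Type} [RCLike 𝕂] {X : Type} [TopologicalSpace X]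
variable {w : X → 𝕂} {f : X → X}
variable {T : ZeroAtInftyContinuousMap X 𝕂 → ZeroAtInftyContinuousMap X 𝕂}

lemma isCompact_pre [T2Space X] (hwc : Continuous w) (hfc : Continuous f)
    (hf : ∀ ε : ℝ, 0 < ε → ∀ K : Set X, IsCompact K →
      IsCompact (f ⁻¹' K ∩ {x | ε ≤ ‖w x‖}))
    {C : ℝ} (hC : ∀ x, ‖w x‖ ≤ C) (hC1 : 1 ≤ C) :
    ∀ (n : ℕ) {ε : ℝ}, 0 < ε → ∀ {K : Set X}, IsCompact K →
      IsCompact ((f^[n]) ⁻¹' K ∩ {x | ε ≤ ‖wn w f n x‖}) := by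
  have hC0 : (0:ℝ) ≤ C := le_trans zero_le_one hC1
  intro n
  induction n with
  | zero =>
      intro ε hε K hK
      by_cases h1 : ε ≤ 1
      · have : (f^[0]) ⁻¹' K ∩ {x | ε ≤ ‖wn w f 0 x‖} = K := by
          ext x; simp [wn_zero, h1]
        rwa [this]
      · have : (f^[0]) ⁻¹' K ∩ {x | ε ≤ ‖wn w f 0 x‖} = ∅ := by
          ext x; simp [wn_zero]; intro _; linarith
        rw [this]; exact isCompact_empty
  | succ n ih =>
      intro ε hε K hK
      have hKcl : IsClosed K := hK.isClosed
      have hclosed : IsClosed ((f^[n+1]) ⁻¹' K ∩ {x | ε ≤ ‖wn w f (n+1) x‖}) := by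
        refine IsClosed.inter (hKcl.preimage (hfc.iterate _)) ?_
        exact isClosed_le continuous_const (wn_continuous hwc hfc _).norm
      have hCn : (0:ℝ) < C ^ n := pow_pos (lt_of_lt_of_le zero_lt_one hC1) n
      have hCp : (0:ℝ) < C := lt_of_lt_of_le zero_lt_one hC1
      have hbig : IsCompact (f ⁻¹' ((f^[n]) ⁻¹' K ∩ {x | ε / C ≤ ‖wn w f n x‖})
          ∩ {x | ε / C ^ n ≤ ‖w x‖}) := by
        refine hf _ (div_pos hε hCn) _ ?_
        exact ih (div_pos hε hCp) hK
      refine hbig.of_isClosed_subset hclosed ?_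
      rintro x ⟨hx1, hx2⟩
      simp only [Set.mem_setOf_eq] at hx2
      have hsplit : wn w f (n+1) x = wn w f n (f x) * w x := wn_succ_left n x
      have hnorm : ‖wn w f n (f x)‖ * ‖w x‖ = ‖wn w f (n+1) x‖ := by
        rw [hsplit, norm_mul]
      have hwx : ‖w x‖ ≤ C := hC x
      have hwn : ‖wn w f n (f x)‖ ≤ C ^ n := norm_wn_le hC hC0 n (f x)
      have hab : ε ≤ ‖wn w f n (f x)‖ * ‖w x‖ := by rw [hnorm]; exact hx2
      have ha0 : (0:ℝ) ≤ ‖wn w f n (f x)‖ := norm_nonneg _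
      have hb0 : (0:ℝ) ≤ ‖w x‖ := norm_nonneg _
      have hw_lb : ε / C ^ n ≤ ‖w x‖ := by
        rw [div_le_iff₀ hCn]
        calc ε ≤ ‖wn w f n (f x)‖ * ‖w x‖ := hab
          _ ≤ C ^ n * ‖w x‖ := by apply mul_le_mul_of_nonneg_right hwn hb0
          _ = ‖w x‖ * C ^ n := by ring
      have hwn_lb : ε / C ≤ ‖wn w f n (f x)‖ := by
        rw [div_le_iff₀ hCp]
        calc ε ≤ ‖wn w f n (f x)‖ * ‖w x‖ := hab
          _ ≤ ‖wn w f n (f x)‖ * C := mul_le_mul_of_nonneg_left hwx ha0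
      constructor
      · constructor
        · show f x ∈ (f^[n]) ⁻¹' K
          have hit : f^[n+1] x = f^[n] (f x) := Function.iterate_succ_apply f n x
          have := hx1
          simp only [Set.mem_preimage] at this ⊢
          rwa [hit] at this
        · exact hwn_lb
      · exact hw_lb

end Op

section Op2
variable {𝕂 : Type} [RCLike 𝕂] {X : Type} [TopologicalSpace X]
variable {w : X → 𝕂} {f : X → X}
variable {T : ZeroAtInftyContinuousMap X 𝕂 → ZeroAtInftyContinuousMap X 𝕂}
variable (hT : ∀ φ x, T φ x = φ (f x) * w x)
include hT

lemma iter_sub (n : ℕ) (φ ψ : ZeroAtInftyContinuousMap X 𝕂) :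
    T^[n] (φ - ψ) = T^[n] φ - T^[n] ψ := by
  ext x
  rw [ZeroAtInftyContinuousMap.sub_apply, iter_apply T hT, iter_apply T hT,
    iter_apply T hT, ZeroAtInftyContinuousMap.sub_apply]
  ring

lemma iter_add (n : ℕ) (φ ψ : ZeroAtInftyContinuousMap X 𝕂) :
    T^[n] (φ + ψ) = T^[n] φ + T^[n] ψ := by
  ext x
  rw [ZeroAtInftyContinuousMap.add_apply, iter_apply T hT, iter_apply T hT,
    iter_apply T hT, ZeroAtInftyContinuousMap.add_apply]
  ring

lemma iter_smul (n : ℕ) (c : 𝕂) (φ : ZeroAtInftyContinuousMap X 𝕂) :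
    T^[n] (c • φ) = c • T^[n] φ := by
  ext x
  rw [ZeroAtInftyContinuousMap.smul_apply, iter_apply T hT, iter_apply T hT,
    ZeroAtInftyContinuousMap.smul_apply, smul_eq_mul, smul_eq_mul]
  ring

lemma iter_smul_real (n : ℕ) (c : ℝ) (φ : ZeroAtInftyContinuousMap X 𝕂) :
    T^[n] (c • φ) = c • T^[n] φ := by
  ext x
  rw [ZeroAtInftyContinuousMap.smul_apply, iter_apply T hT, iter_apply T hT,
    ZeroAtInftyContinuousMap.smul_apply, RCLike.real_smul_eq_coe_mul,
    RCLike.real_smul_eq_coe_mul]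
  ring

lemma norm_iter_le {C : ℝ} (hC : ∀ x, ‖w x‖ ≤ C) (hC0 : 0 ≤ C) (n : ℕ)
    (φ : ZeroAtInftyContinuousMap X 𝕂) : ‖T^[n] φ‖ ≤ C ^ n * ‖φ‖ := by
  refine norm_le_of (by positivity) fun x => ?_
  rw [iter_apply T hT n φ x, norm_mul]
  calc ‖φ (f^[n] x)‖ * ‖wn w f n x‖ ≤ ‖φ‖ * C ^ n :=
        mul_le_mul (apply_le_norm _ _) (norm_wn_le hC hC0 n x) (norm_nonneg _) (norm_nonneg _)
    _ = C ^ n * ‖φ‖ := by ring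

lemma le_norm_iter (n : ℕ) (φ : ZeroAtInftyContinuousMap X 𝕂) (x : X) :
    ‖φ (f^[n] x)‖ * ‖wn w f n x‖ ≤ ‖T^[n] φ‖ := by
  rw [← norm_mul, ← iter_apply T hT n φ x]
  exact apply_le_norm _ _

/-- bound on iterate norm from a bound on the weight products over the preimage
of the support -/
lemma norm_iter_le_of_supp {U : Set X} {φ : ZeroAtInftyContinuousMap X 𝕂}
    (hsupp : ∀ y, y ∉ U → φ y = 0) {n : ℕ} {r : ℝ} (hr : 0 ≤ r)
    (h : ∀ x, f^[n] x ∈ U → ‖wn w f n x‖ ≤ r) : ‖T^[n] φ‖ ≤ ‖φ‖ * r := by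
  refine norm_le_of (by positivity) fun x => ?_
  rw [iter_apply T hT n φ x, norm_mul]
  by_cases hx : f^[n] x ∈ U
  · exact mul_le_mul (apply_le_norm _ _) (h x hx) (norm_nonneg _) (norm_nonneg _)
  · rw [hsupp _ hx]
    simp only [norm_zero, zero_mul]
    positivity
end Op2

section Bump
variable {𝕂 : Type} [RCLike 𝕂] {X : Type} [TopologicalSpace X]

lemma exists_bump [LocallyCompactSpace X] [T2Space X] {U : Set X} (hU : IsOpen U)
    {y : X} (hy : y ∈ U) :
    ∃ (ψ : ZeroAtInftyContinuousMap X 𝕂) (g : X → ℝ),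
      (∀ z, ψ z = (g z : 𝕂)) ∧ (∀ z, g z ∈ Set.Icc (0:ℝ) 1) ∧ g y = 1 ∧
      (∀ z, z ∉ U → g z = 0) := by
  obtain ⟨gc, hg1, hg0, hgcs, hgIcc⟩ :=
    exists_continuous_one_zero_of_isCompact (isCompact_singleton (x := y))
      hU.isClosed_compl (by simpa using hy)
  have hcont : Continuous fun z => ((gc z : ℝ) : 𝕂) :=
    RCLike.continuous_ofReal.comp gc.continuous
  have hz : Tendsto (fun z => ((gc z : ℝ) : 𝕂)) (cocompact X) (𝓝 0) := by
    have hev : ∀ᶠ z in cocompact X, (fun z => ((gc z : ℝ) : 𝕂)) z = 0 := by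
      rw [Filter.eventually_iff, Filter.mem_cocompact]
      refine ⟨tsupport gc, hgcs, fun z hz => ?_⟩
      have : gc z = 0 := image_eq_zero_of_notMem_tsupport hz
      simp [this]
    have heq : (fun _ : X => (0:𝕂)) =ᶠ[cocompact X] fun z => ((gc z : ℝ) : 𝕂) :=
      (Filter.EventuallyEq.symm (by exact hev))
    exact Tendsto.congr' heq tendsto_const_nhds
  refine ⟨⟨⟨fun z => ((gc z : ℝ) : 𝕂), hcont⟩, hz⟩, gc, fun z => rfl, hgIcc,
    hg1 rfl, fun z hzU => hg0 hzU⟩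

end Bump

lemma ennreal_eq_zero_of_le (a : ℝ≥0∞) (h : ∀ ε : ℝ, 0 < ε → a ≤ ENNReal.ofReal ε) :
    a = 0 := by
  by_contra ha
  have hane : a ≠ ⊤ := by
    intro htop
    have := h 1 one_pos
    rw [htop] at this
    exact absurd this (by simp [ENNReal.ofReal_lt_top.ne])
  have hpos : 0 < a.toReal := ENNReal.toReal_pos ha hane
  have := h (a.toReal / 2) (by linarith)
  have hlt : ENNReal.ofReal (a.toReal / 2) < a := by
    conv_rhs => rw [← ENNReal.ofReal_toReal hane]
    exact (ENNReal.ofReal_lt_ofReal_iff hpos).2 (by linarith)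
  exact absurd this (not_le.2 hlt)

section LY
variable {𝕂 : Type} [RCLike 𝕂] {X : Type} [TopologicalSpace X]
variable {w : X → 𝕂} {f : X → X}
variable {T : ZeroAtInftyContinuousMap X 𝕂 → ZeroAtInftyContinuousMap X 𝕂}
variable (hT : ∀ φ x, T φ x = φ (f x) * w x)
include hT

lemma iter_zero' (n : ℕ) : T^[n] (0 : ZeroAtInftyContinuousMap X 𝕂) = 0 := by
  ext x
  rw [iter_apply T hT, ZeroAtInftyContinuousMap.zero_apply,
    ZeroAtInftyContinuousMap.zero_apply, zero_mul]

lemma liYorke_of_semiIrregular (φ : ZeroAtInftyContinuousMap X 𝕂)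
    (h0 : ∀ ε : ℝ, 0 < ε → ∃ᶠ n in atTop, ‖T^[n] φ‖ < ε)
    (h1 : ∃ δ : ℝ, 0 < δ ∧ ∃ᶠ n in atTop, δ ≤ ‖T^[n] φ‖) :
    LiYorkeChaotic T := by
  obtain ⟨δ, hδ, hfreqδ⟩ := h1
  have hφne : φ ≠ 0 := by
    rintro rfl
    obtain ⟨n, hn⟩ := hfreqδ.exists
    rw [iter_zero' hT, norm_zero] at hn
    exact absurd hn (not_le.2 hδ)
  set g : ℝ → ZeroAtInftyContinuousMap X 𝕂 := fun t => ((t : 𝕂)) • φ with hg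
  have hinj : Function.Injective g := by
    intro t1 t2 h
    obtain ⟨z, hz⟩ : ∃ z, φ z ≠ 0 := by
      by_contra hc
      push_neg at hc
      exact hφne (by ext z; simpa using hc z)
    have hz2 : (t1 : 𝕂) * φ z = (t2 : 𝕂) * φ z := by
      have := congrArg (fun ψ : ZeroAtInftyContinuousMap X 𝕂 => ψ z) h
      simpa [hg, ZeroAtInftyContinuousMap.smul_apply, smul_eq_mul] using this
    have : (t1 : 𝕂) = (t2 : 𝕂) := mul_right_cancel₀ hz hz2
    exact_mod_cast this
  refine ⟨Set.range g, ?_, ?_⟩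
  · intro hc
    have := hc.preimage hinj
    rw [Set.preimage_range] at this
    exact Set.not_countable_univ this
  · rintro a ⟨t, rfl⟩ b ⟨t', rfl⟩ hab
    have htt : t ≠ t' := fun h => hab (by rw [h])
    have habs : (0:ℝ) < |t - t'| := abs_pos.2 (sub_ne_zero.2 htt)
    have key : ∀ n : ℕ, edist (T^[n] (g t)) (T^[n] (g t'))
        = ENNReal.ofReal (|t - t'| * ‖T^[n] φ‖) := by
      intro n
      have hdiff : T^[n] (g t) - T^[n] (g t') = ((t - t' : ℝ) : 𝕂) • T^[n] φ := by
        have hgd : g t - g t' = ((t - t' : ℝ) : 𝕂) • φ := by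
          ext z
          simp only [hg, ZeroAtInftyContinuousMap.sub_apply,
            ZeroAtInftyContinuousMap.smul_apply, smul_eq_mul]
          push_cast
          ring
        rw [← iter_sub hT, hgd, iter_smul hT]
      have hns : ‖((t - t' : ℝ) : 𝕂) • T^[n] φ‖ = |t - t'| * ‖T^[n] φ‖ := by
        rw [c0_norm_smul, RCLike.norm_ofReal]
      rw [edist_eq_coe_nnnorm_sub, hdiff, ← ofReal_norm_eq_coe_nnnorm, hns]
    constructor
    · refine ennreal_eq_zero_of_le _ fun ε hε => ?_
      have hε' : (0:ℝ) < ε / (|t - t'| + 1) := by positivity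
      refine liminf_le_of_frequently_le' ((h0 _ hε').mono fun n hn => ?_)
      rw [key n]
      refine ENNReal.ofReal_le_ofReal ?_
      have h1 : |t - t'| * ‖T^[n] φ‖ ≤ |t - t'| * (ε / (|t - t'| + 1)) :=
        mul_le_mul_of_nonneg_left hn.le (abs_nonneg _)
      have h2 : |t - t'| * (ε / (|t - t'| + 1)) ≤ ε := by
        rw [mul_div_assoc']
        rw [div_le_iff₀ (by positivity)]
        nlinarith [abs_nonneg (t - t')]
      linarith
    · have hb : (0:ℝ≥0∞) < ENNReal.ofReal (|t - t'| * δ) :=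
        ENNReal.ofReal_pos.2 (by positivity)
      refine lt_of_lt_of_le hb (le_limsup_of_frequently_le ?_)
      refine hfreqδ.mono fun n hn => ?_
      rw [key n]
      exact ENNReal.ofReal_le_ofReal (mul_le_mul_of_nonneg_left hn (abs_nonneg _))

end LY

section Sup
variable {𝕂 : Type} [RCLike 𝕂] {X : Type} [TopologicalSpace X]
variable {w : X → 𝕂} {f : X → X}

lemma tendsto_sup_zero_of_bound {B : Set X} {N : ℕ → ℕ} {D : ℕ → ℝ}
    (hD : Tendsto D atTop (𝓝 0))
    (h : ∀ j x, f^[N j] x ∈ B → ‖wn w f (N j) x‖ ≤ D j) :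
    Tendsto (fun j => ⨆ x ∈ (f^[N j]) ⁻¹' B, (‖wn w f (N j) x‖₊ : ℝ≥0∞))
      atTop (𝓝 0) := by
  rw [ENNReal.tendsto_nhds_zero]
  intro ε hε
  rcases eq_or_ne ε ⊤ with rfl | hεt
  · exact Filter.Eventually.of_forall fun _ => le_top
  · have hεr : 0 < ε.toReal := ENNReal.toReal_pos hε.ne' hεt
    have hev : ∀ᶠ j in atTop, D j < ε.toReal := hD.eventually_lt_const hεr
    refine hev.mono fun j hj => ?_
    refine iSup_le fun x => iSup_le fun hx => ?_
    rw [← ofReal_norm_eq_coe_nnnorm]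
    calc ENNReal.ofReal ‖wn w f (N j) x‖ ≤ ENNReal.ofReal ε.toReal :=
          ENNReal.ofReal_le_ofReal (le_trans (h j x hx) hj.le)
      _ = ε := ENNReal.ofReal_toReal hεt

lemma sup_eq_top_iff_unbounded {B : ℕ → Set X} :
    (⨆ (i : ℕ) (n : ℕ) (_ : 0 < n), ⨆ x ∈ (f^[n]) ⁻¹' (B i),
        (‖wn w f n x‖₊ : ℝ≥0∞)) = ⊤ ↔
    ∀ R : ℝ, ∃ i q x, 0 < q ∧ f^[q] x ∈ B i ∧ R < ‖wn w f q x‖ := by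
  constructor
  · intro htop R
    by_contra hc
    push_neg at hc
    have hbd : (⨆ (i : ℕ) (n : ℕ) (_ : 0 < n), ⨆ x ∈ (f^[n]) ⁻¹' (B i),
        (‖wn w f n x‖₊ : ℝ≥0∞)) ≤ ENNReal.ofReal R := by
      refine iSup_le fun i => iSup_le fun q => iSup_le fun hq => iSup_le fun x =>
        iSup_le fun hx => ?_
      rw [← ofReal_norm_eq_coe_nnnorm]
      exact ENNReal.ofReal_le_ofReal (hc i q x hq hx)
    rw [htop] at hbd
    exact absurd hbd (by simp [ENNReal.ofReal_lt_top.ne])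
  · intro h
    by_contra hne
    have hlt : (⨆ (i : ℕ) (n : ℕ) (_ : 0 < n), ⨆ x ∈ (f^[n]) ⁻¹' (B i),
        (‖wn w f n x‖₊ : ℝ≥0∞)) < ⊤ := lt_top_iff_ne_top.2 hne
    set S := (⨆ (i : ℕ) (n : ℕ) (_ : 0 < n), ⨆ x ∈ (f^[n]) ⁻¹' (B i),
        (‖wn w f n x‖₊ : ℝ≥0∞)) with hS
    obtain ⟨i, q, x, hq, hx, hR⟩ := h S.toReal
    have hle : (‖wn w f q x‖₊ : ℝ≥0∞) ≤ S := by
      rw [hS]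
      refine le_iSup_of_le i (le_iSup_of_le q (le_iSup_of_le hq ?_))
      exact le_iSup₂_of_le x (Set.mem_preimage.2 hx) le_rfl
    have : (‖wn w f q x‖₊ : ℝ≥0∞) ≤ ENNReal.ofReal S.toReal := by
      rwa [ENNReal.ofReal_toReal hlt.ne]
    rw [← ofReal_norm_eq_coe_nnnorm] at this
    have := (ENNReal.ofReal_le_ofReal_iff ENNReal.toReal_nonneg).1 this
    linarith

lemma eventually_small_of_tendsto_sup {B : Set X} {N : ℕ → ℕ}
    (h : Tendsto (fun j => ⨆ x ∈ (f^[N j]) ⁻¹' B, (‖wn w f (N j) x‖₊ : ℝ≥0∞))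
      atTop (𝓝 0)) {ε : ℝ} (hε : 0 < ε) :
    ∀ᶠ j in atTop, ∀ x, f^[N j] x ∈ B → ‖wn w f (N j) x‖ ≤ ε := by
  rw [ENNReal.tendsto_nhds_zero] at h
  refine (h (ENNReal.ofReal ε) (ENNReal.ofReal_pos.2 hε)).mono fun j hj x hx => ?_
  have h1 : (‖wn w f (N j) x‖₊ : ℝ≥0∞) ≤ ENNReal.ofReal ε :=
    le_trans (le_iSup₂_of_le x (Set.mem_preimage.2 hx) le_rfl) hj
  rw [← ofReal_norm_eq_coe_nnnorm] at h1
  exact (ENNReal.ofReal_le_ofReal_iff hε.le).1 h1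

end Sup

section Fwd
variable {𝕂 : Type} [RCLike 𝕂] {X : Type} [TopologicalSpace X]
variable {w : X → 𝕂} {f : X → X}
variable {T : ZeroAtInftyContinuousMap X 𝕂 → ZeroAtInftyContinuousMap X 𝕂}

lemma forward_direction [LocallyCompactSpace X] [T2Space X]
    (hwc : Continuous w) (hfc : Continuous f)
    (hf : ∀ ε : ℝ, 0 < ε → ∀ K : Set X, IsCompact K →
      IsCompact (f ⁻¹' K ∩ {x | ε ≤ ‖w x‖}))
    {C : ℝ} (hC : ∀ x, ‖w x‖ ≤ C) (hC1 : 1 ≤ C)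
    (hT : ∀ φ x, T φ x = φ (f x) * w x) (hLY : LiYorkeChaotic T) :
    ∃ B : ℕ → Set X,
      (∀ i, IsOpen (B i) ∧ IsCompact (closure (B i))) ∧
      (∃ n : ℕ → ℕ, StrictMono n ∧ (∀ j, 0 < n j) ∧
        ∀ i, Tendsto (fun j => ⨆ x ∈ (f^[n j]) ⁻¹' (B i),
          (‖wn w f (n j) x‖₊ : ℝ≥0∞)) atTop (𝓝 0)) ∧
      (⨆ (i : ℕ) (n : ℕ) (_ : 0 < n), ⨆ x ∈ (f^[n]) ⁻¹' (B i),
          (‖wn w f n x‖₊ : ℝ≥0∞)) = ⊤ := by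
  have hC0 : (0:ℝ) ≤ C := zero_le_one.trans hC1
  obtain ⟨S, hSc, hSp⟩ := hLY
  obtain ⟨a, ha, b, hb, hab⟩ : ∃ a ∈ S, ∃ b ∈ S, a ≠ b := by
    by_contra h
    push_neg at h
    exact hSc (Set.Subsingleton.countable (fun x hx y hy => h x hx y hy))
  obtain ⟨hlim0, hlimpos⟩ := hSp ha hb hab
  set z := a - b with hzdef
  have hz : ∀ n : ℕ, edist (T^[n] a) (T^[n] b) = ENNReal.ofReal ‖T^[n] z‖ := by
    intro n
    rw [edist_eq_coe_nnnorm_sub, ← iter_sub hT, ← hzdef, ofReal_norm_eq_coe_nnnorm]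
  simp only [hz] at hlim0 hlimpos
  have hznorm : (0:ℝ) < ‖z‖ := by
    rw [norm_pos_iff]
    exact sub_ne_zero_of_ne hab
  -- frequently small
  have hfreq_small : ∀ ε : ℝ, 0 < ε → ∃ᶠ n in atTop, ‖T^[n] z‖ < ε := by
    intro ε hε
    have h1 : Filter.liminf (fun n : ℕ => ENNReal.ofReal ‖T^[n] z‖) atTop
        < ENNReal.ofReal ε := by
      rw [hlim0]; exact ENNReal.ofReal_pos.2 hε
    refine (frequently_lt_of_liminf_lt (by isBoundedDefault) h1).mono fun n hn => ?_
    exact (ENNReal.ofReal_lt_ofReal_iff hε).1 hn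
  -- frequently big
  obtain ⟨δ, hδ, hfreq_big⟩ : ∃ δ : ℝ, 0 < δ ∧ ∃ᶠ n in atTop, δ < ‖T^[n] z‖ := by
    set L := Filter.limsup (fun n : ℕ => ENNReal.ofReal ‖T^[n] z‖) atTop with hL
    have hd0 : (0:ℝ≥0∞) < min L 1 := lt_min hlimpos zero_lt_one
    have hdt : min L 1 ≠ ⊤ := (lt_of_le_of_lt (min_le_right _ _) one_lt_top).ne
    have hhalf : min L 1 / 2 < L :=
      lt_of_lt_of_le (ENNReal.half_lt_self hd0.ne' hdt) (min_le_left _ _)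
    refine ⟨(min L 1 / 2).toReal, ENNReal.toReal_pos
      (ENNReal.half_pos hd0.ne').ne' (by simp [ENNReal.div_eq_top, hdt]), ?_⟩
    refine (frequently_lt_of_lt_limsup (by isBoundedDefault) hhalf).mono fun n hn => ?_
    have hne : min L 1 / 2 ≠ ⊤ := by simp [ENNReal.div_eq_top, hdt]
    exact (ENNReal.lt_ofReal_iff_toReal_lt hne).1 hn
  -- extraction of fast decay subsequence
  obtain ⟨NN, hNNmono, hNN⟩ := extraction_forall_of_frequently
    (P := fun j k => 1 ≤ k ∧ ‖T^[k] z‖ < (1/2 : ℝ)^j)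
    (fun j => ((hfreq_small _ (pow_pos one_half_pos j)).and_eventually
      (eventually_ge_atTop 1)).mono fun k hk => ⟨hk.2, hk.1⟩)
  -- witnesses
  have hwit : ∀ m : ℕ, δ < ‖T^[m] z‖ →
      ∃ xh, δ < ‖z (f^[m] xh)‖ * ‖wn w f m xh‖ := by
    intro m hm
    obtain ⟨xh, hxh⟩ := exists_gt_of_lt_norm hδ.le hm
    refine ⟨xh, ?_⟩
    rwa [iter_apply T hT, norm_mul] at hxh
  by_cases Hsmall : ∀ η : ℝ, 0 < η → ∃ᶠ m in atTop,
      ∃ xh, δ < ‖z (f^[m] xh)‖ * ‖wn w f m xh‖ ∧ ‖z (f^[m] xh)‖ < η ∧ 1 ≤ m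
  -- CASE 1
  · refine ⟨fun i => {x | 1/((i:ℝ)+1) < ‖z x‖}, fun i => ⟨?_, ?_⟩, ⟨NN, hNNmono,
      fun j => (hNN j).1, fun i => ?_⟩, ?_⟩
    · exact isOpen_lt continuous_const (map_continuous z).norm
    · have hipos : (0:ℝ) < 1/((i:ℝ)+1) := by positivity
      refine (isCompact_le_norm z hipos).of_isClosed_subset isClosed_closure
        (closure_minimal (fun x hx => le_of_lt (show 1/((i:ℝ)+1) < ‖z x‖ from hx))
          (isClosed_le continuous_const (map_continuous z).norm))
    · -- (A)
      refine tendsto_sup_zero_of_bound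
        (D := fun j => ((i:ℝ)+1) * (1/2)^j) ?_ ?_
      · have := tendsto_pow_atTop_nhds_zero_of_lt_one (le_of_lt one_half_pos)
          (by norm_num : (1/2:ℝ) < 1)
        simpa using this.const_mul ((i:ℝ)+1)
      · intro j x hx
        have hle : ‖z (f^[NN j] x)‖ * ‖wn w f (NN j) x‖ ≤ ‖T^[NN j] z‖ :=
          le_norm_iter hT (NN j) z x
        have hsm : ‖T^[NN j] z‖ < (1/2:ℝ)^j := (hNN j).2
        have hmem : 1/((i:ℝ)+1) < ‖z (f^[NN j] x)‖ := hx
        have hipos : (0:ℝ) < (i:ℝ)+1 := by positivity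
        have h2 : (1/((i:ℝ)+1)) * ‖wn w f (NN j) x‖ ≤ (1/2:ℝ)^j := by
          calc (1/((i:ℝ)+1)) * ‖wn w f (NN j) x‖
              ≤ ‖z (f^[NN j] x)‖ * ‖wn w f (NN j) x‖ :=
                mul_le_mul_of_nonneg_right hmem.le (norm_nonneg _)
            _ ≤ ‖T^[NN j] z‖ := hle
            _ ≤ (1/2:ℝ)^j := hsm.le
        have := mul_le_mul_of_nonneg_left h2 hipos.le
        calc ‖wn w f (NN j) x‖ = ((i:ℝ)+1) * ((1/((i:ℝ)+1)) * ‖wn w f (NN j) x‖) := by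
              field_simp
          _ ≤ ((i:ℝ)+1) * (1/2:ℝ)^j := this
    · -- (B)
      rw [sup_eq_top_iff_unbounded]
      intro R
      have hη : (0:ℝ) < δ/(max R 0 + 1) := by positivity
      obtain ⟨m, xh, hprod, hsm, hm1⟩ := (Hsmall _ hη).exists
      have hspos : (0:ℝ) < ‖z (f^[m] xh)‖ := by
        by_contra hc
        push_neg at hc
        nlinarith [norm_nonneg (wn w f m xh), mul_nonpos_of_nonpos_of_nonneg hc
          (norm_nonneg (wn w f m xh))]
      obtain ⟨i, hi⟩ := exists_nat_one_div_lt hspos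
      refine ⟨i, m, xh, hm1, ?_, ?_⟩
      · exact_mod_cast hi
      · -- R < ‖wn m xh‖
        have h1 : δ < (δ/(max R 0 + 1)) * ‖wn w f m xh‖ := by
          calc δ < ‖z (f^[m] xh)‖ * ‖wn w f m xh‖ := hprod
            _ ≤ (δ/(max R 0 + 1)) * ‖wn w f m xh‖ :=
              mul_le_mul_of_nonneg_right hsm.le (norm_nonneg _)
        have hmax : (0:ℝ) < max R 0 + 1 := by positivity
        have h2 : max R 0 + 1 < ‖wn w f m xh‖ := by
          rw [div_mul_eq_mul_div, lt_div_iff₀ hmax] at h1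
          nlinarith
        calc R ≤ max R 0 := le_max_left _ _
          _ < ‖wn w f m xh‖ := by linarith
  -- CASE 2
  · push_neg at Hsmall
    obtain ⟨η, hη, hnf⟩ := Hsmall
    have hnf : ∀ᶠ m in atTop, ¬ ∃ xh, δ < ‖z (f^[m] xh)‖ * ‖wn w f m xh‖ ∧
        ‖z (f^[m] xh)‖ < η ∧ 1 ≤ m :=
      hnf.mono fun m hm ⟨xh, h1, h2, h3⟩ => absurd (hm xh h1 h2) (not_lt.2 h3)
    have hfreq2 : ∃ᶠ m in atTop, ∃ xh,
        δ < ‖z (f^[m] xh)‖ * ‖wn w f m xh‖ ∧ η ≤ ‖z (f^[m] xh)‖ ∧ 1 ≤ m := by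
      refine (((hfreq_big.and_eventually (eventually_ge_atTop 1)).and_eventually
        hnf).mono ?_)
      rintro m ⟨⟨hδm, hm1⟩, hno⟩
      obtain ⟨xh, hxh⟩ := hwit m hδm
      refine ⟨xh, hxh, ?_, hm1⟩
      by_contra hc
      push_neg at hc
      exact hno ⟨xh, hxh, hc, hm1⟩
    have hη2 : (0:ℝ) < η/2 := by positivity
    refine ⟨fun k => (f^[NN (Nat.unpair k).1]) ⁻¹' {y | η/2 < ‖z y‖} ∩
        {x | 1/(((Nat.unpair k).2 : ℝ)+1) < ‖wn w f (NN (Nat.unpair k).1) x‖},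
      fun k => ⟨?_, ?_⟩, ⟨NN, hNNmono, fun j => (hNN j).1, fun k => ?_⟩, ?_⟩
    · exact IsOpen.inter
        ((isOpen_lt continuous_const (map_continuous z).norm).preimage (hfc.iterate _))
        (isOpen_lt continuous_const (wn_continuous hwc hfc _).norm)
    · set j := (Nat.unpair k).1
      set p := (Nat.unpair k).2
      have hpp : (0:ℝ) < 1/((p:ℝ)+1) := by positivity
      have hcomp := isCompact_pre hwc hfc hf hC hC1 (NN j) hpp
        (isCompact_le_norm z hη2)
      have hclosed : IsClosed ((f^[NN j]) ⁻¹' {x | η/2 ≤ ‖z x‖} ∩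
          {x | 1/((p:ℝ)+1) ≤ ‖wn w f (NN j) x‖}) := by
        refine IsClosed.inter ?_ (isClosed_le continuous_const
          (wn_continuous hwc hfc _).norm)
        exact (isClosed_le continuous_const (map_continuous z).norm).preimage
          (hfc.iterate _)
      refine hcomp.of_isClosed_subset isClosed_closure (closure_minimal ?_ hclosed)
      rintro x ⟨hx1, hx2⟩
      refine ⟨?_, ?_⟩
      · show x ∈ (f^[NN j]) ⁻¹' {x | η/2 ≤ ‖z x‖}
        exact le_of_lt (show η/2 < ‖z (f^[NN j] x)‖ from hx1)
      · show 1/((p:ℝ)+1) ≤ ‖wn w f (NN j) x‖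
        exact le_of_lt (show 1/((p:ℝ)+1) < ‖wn w f (NN j) x‖ from hx2)
    · -- (A)
      set j := (Nat.unpair k).1
      set p := (Nat.unpair k).2
      refine tendsto_sup_zero_of_bound
        (D := fun j' => ((((p:ℝ)+1) * (2/η)) * C^(NN j)) * (1/2)^j') ?_ ?_
      · have := tendsto_pow_atTop_nhds_zero_of_lt_one (le_of_lt one_half_pos)
          (by norm_num : (1/2:ℝ) < 1)
        simpa using this.const_mul ((((p:ℝ)+1) * (2/η)) * C^(NN j))
      · intro j' x hx
        obtain ⟨hx1, hx2⟩ := hx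
        set u := f^[NN j'] x with hu
        have h1 : η/2 < ‖z (f^[NN j] u)‖ := hx1
        have h2 : 1/((p:ℝ)+1) < ‖wn w f (NN j) u‖ := hx2
        have key1 : wn w f (NN j' + NN j) x = wn w f (NN j') x * wn w f (NN j) u :=
          wn_add _ _ x
        have key2 : f^[NN j' + NN j] x = f^[NN j] u := by
          rw [Nat.add_comm, Function.iterate_add_apply]
        have hTnorm : ‖z (f^[NN j' + NN j] x)‖ * ‖wn w f (NN j' + NN j) x‖
            ≤ ‖T^[NN j' + NN j] z‖ := le_norm_iter hT _ z x
        have hiter : T^[NN j' + NN j] z = T^[NN j] (T^[NN j'] z) := by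
          rw [Nat.add_comm, Function.iterate_add_apply]
        have hTb : ‖T^[NN j' + NN j] z‖ ≤ C^(NN j) * ‖T^[NN j'] z‖ := by
          rw [hiter]; exact norm_iter_le hT hC hC0 _ _
        have hsmj' : ‖T^[NN j'] z‖ < (1/2:ℝ)^j' := (hNN j').2
        have e1 : ‖z (f^[NN j' + NN j] x)‖ * ‖wn w f (NN j' + NN j) x‖
            = ‖z (f^[NN j] u)‖ * (‖wn w f (NN j') x‖ * ‖wn w f (NN j) u‖) := by
          rw [key2, key1, norm_mul]
        have big : (η/2) * ((1/((p:ℝ)+1)) * ‖wn w f (NN j') x‖)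
            ≤ C^(NN j) * (1/2:ℝ)^j' := by
          have step1 : (η/2) * ((1/((p:ℝ)+1)) * ‖wn w f (NN j') x‖)
              ≤ ‖z (f^[NN j] u)‖ * (‖wn w f (NN j) u‖ * ‖wn w f (NN j') x‖) := by
            refine mul_le_mul h1.le ?_ (by positivity) (norm_nonneg _)
            exact mul_le_mul_of_nonneg_right h2.le (norm_nonneg _)
          calc (η/2) * ((1/((p:ℝ)+1)) * ‖wn w f (NN j') x‖)
              ≤ ‖z (f^[NN j] u)‖ * (‖wn w f (NN j) u‖ * ‖wn w f (NN j') x‖) := step1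
            _ = ‖z (f^[NN j' + NN j] x)‖ * ‖wn w f (NN j' + NN j) x‖ := by
                rw [e1]; ring
            _ ≤ ‖T^[NN j' + NN j] z‖ := hTnorm
            _ ≤ C^(NN j) * ‖T^[NN j'] z‖ := hTb
            _ ≤ C^(NN j) * (1/2:ℝ)^j' :=
                mul_le_mul_of_nonneg_left hsmj'.le (by positivity)
        have hc1 : (0:ℝ) < ((p:ℝ)+1) * (2/η) := by positivity
        calc ‖wn w f (NN j') x‖
            = (((p:ℝ)+1) * (2/η)) * ((η/2) * ((1/((p:ℝ)+1)) * ‖wn w f (NN j') x‖)) := by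
              field_simp
          _ ≤ (((p:ℝ)+1) * (2/η)) * (C^(NN j) * (1/2:ℝ)^j') :=
              mul_le_mul_of_nonneg_left big hc1.le
          _ = ((((p:ℝ)+1) * (2/η)) * C^(NN j)) * (1/2:ℝ)^j' := by ring
    · -- (B)
      rw [sup_eq_top_iff_unbounded]
      intro R
      obtain ⟨j, hj⟩ := pow_unbounded_of_one_lt
        ((max R 0 + 1) * ‖z‖ / (δ * η)) (one_lt_two (α := ℝ))
      obtain ⟨m, hmge, xh, hprod, hs, hm1⟩ := frequently_atTop.1 hfreq2 (NN j + 1)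
      have hmlt : NN j < m := hmge
      set q := m - NN j with hqdef
      have hq : 0 < q := Nat.sub_pos_of_lt hmlt
      have hqm : q + NN j = m := Nat.sub_add_cancel hmlt.le
      set u := f^[q] xh with hu
      have hfu : f^[NN j] u = f^[m] xh := by
        rw [hu, ← Function.iterate_add_apply, Nat.add_comm, hqm]
      have hsplit : wn w f m xh = wn w f q xh * wn w f (NN j) u := by
        rw [← hqm]; exact wn_add q (NN j) xh
      set W := ‖wn w f q xh‖ with hW
      set β := ‖wn w f (NN j) u‖ with hβ
      have hprod' : δ < ‖z (f^[m] xh)‖ * (W * β) := by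
        rw [hsplit, norm_mul] at hprod
        exact hprod
      have hβpos : (0:ℝ) < β := by
        by_contra hcon
        push_neg at hcon
        have hβ0 : β = 0 := le_antisymm hcon (norm_nonneg _)
        rw [hβ0, mul_zero, mul_zero] at hprod'
        exact absurd hprod' (not_lt.2 hδ.le)
      obtain ⟨p, hp⟩ := exists_nat_one_div_lt hβpos
      refine ⟨Nat.pair j p, q, xh, hq, ?_, ?_⟩
      · simp only [Nat.unpair_pair, Set.mem_inter_iff, Set.mem_preimage,
          Set.mem_setOf_eq]
        constructor
        · show η/2 < ‖z (f^[NN j] (f^[q] xh))‖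
          rw [← hu, hfu]
          linarith
        · show 1/((p:ℝ)+1) < ‖wn w f (NN j) (f^[q] xh)‖
          rw [← hu, ← hβ]
          exact_mod_cast hp
      · -- R < W
        have hβb : β * η ≤ (1/2:ℝ)^j := by
          calc β * η ≤ β * ‖z (f^[NN j] u)‖ := by
                refine mul_le_mul_of_nonneg_left ?_ (norm_nonneg _)
                rw [hfu]; exact hs
            _ = ‖z (f^[NN j] u)‖ * ‖wn w f (NN j) u‖ := by rw [hβ]; ring
            _ ≤ ‖T^[NN j] z‖ := le_norm_iter hT _ z u
            _ ≤ (1/2:ℝ)^j := (hNN j).2.le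
        have hβ' : β ≤ (1/2:ℝ)^j / η := by
          rw [le_div_iff₀ hη]; exact hβb
        have hsz : ‖z (f^[m] xh)‖ ≤ ‖z‖ := apply_le_norm z _
        have hW0 : (0:ℝ) ≤ W := norm_nonneg _
        have step2 : δ < ‖z‖ * (W * ((1/2:ℝ)^j / η)) := by
          calc δ < ‖z (f^[m] xh)‖ * (W * β) := hprod'
            _ ≤ ‖z‖ * (W * β) := by
                refine mul_le_mul_of_nonneg_right hsz ?_
                positivity
            _ ≤ ‖z‖ * (W * ((1/2:ℝ)^j / η)) := by
                refine mul_le_mul_of_nonneg_left ?_ hznorm.le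
                exact mul_le_mul_of_nonneg_left hβ' hW0
        have e : ((1/2:ℝ)^j) * (2:ℝ)^j = 1 := by
          rw [← mul_pow]; norm_num
        have h2η : (0:ℝ) < (2:ℝ)^j * η := by positivity
        have step3 : δ * ((2:ℝ)^j * η) < ‖z‖ * W := by
          have h3 := mul_lt_mul_of_pos_right step2 h2η
          calc δ * ((2:ℝ)^j * η) < ‖z‖ * (W * ((1/2:ℝ)^j / η)) * ((2:ℝ)^j * η) := h3
            _ = ‖z‖ * W * (((1/2:ℝ)^j * (2:ℝ)^j) * (η / η)) := by ring
            _ = ‖z‖ * W := by rw [e, div_self hη.ne']; ring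
        have hj' : (max R 0 + 1) * ‖z‖ < (2:ℝ)^j * (δ * η) := by
          rw [div_lt_iff₀ (by positivity : (0:ℝ) < δ * η)] at hj
          linarith
        have final : (max R 0 + 1) * ‖z‖ < ‖z‖ * W := by
          calc (max R 0 + 1) * ‖z‖ < (2:ℝ)^j * (δ * η) := hj'
            _ = δ * ((2:ℝ)^j * η) := by ring
            _ < ‖z‖ * W := step3
        have : max R 0 + 1 < W := by
          have := (mul_lt_mul_iff_left₀ hznorm).1
            (by rw [mul_comm ‖z‖ W] at final; exact final)
          exact this
        calc R ≤ max R 0 := le_max_left _ _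
          _ < W := by linarith

end Fwd

section Bwd
variable {𝕂 : Type} [RCLike 𝕂] {X : Type} [TopologicalSpace X]

structure LYS (X : Type) (𝕂 : Type) [TopologicalSpace X] [RCLike 𝕂] where
  J : ℕ
  m : ℕ
  x : X
  c : ℝ
  P : ZeroAtInftyContinuousMap X 𝕂

variable {w : X → 𝕂} {f : X → X}
variable {T : ZeroAtInftyContinuousMap X 𝕂 → ZeroAtInftyContinuousMap X 𝕂}

/-- invariant of the recursive construction -/
def Inv (w : X → 𝕂) (f : X → X)
    (T : ZeroAtInftyContinuousMap X 𝕂 → ZeroAtInftyContinuousMap X 𝕂)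
    (nn : ℕ → ℕ) (k : ℕ) (s : LYS X 𝕂) : Prop :=
  0 < s.m ∧ 0 < s.c ∧ 1 ≤ s.c * ‖wn w f s.m s.x‖ ∧
  (∀ z, 0 ≤ RCLike.re (s.P z)) ∧
  s.c ≤ RCLike.re (s.P (f^[s.m] s.x)) ∧
  ‖T^[nn s.J] s.P‖ ≤ (1/2:ℝ)^k ∧
  Tendsto (fun j => ‖T^[nn j] s.P‖) atTop (𝓝 0)

/-- relation between consecutive states -/
def Link (C : ℝ) (nn : ℕ → ℕ) (k : ℕ) (s s' : LYS X 𝕂) : Prop :=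
  s.J < s'.J ∧ s'.c * C ^ (nn s.J) ≤ (1/2:ℝ)^(k+1) ∧
  ‖s'.P - s.P‖ ≤ s'.c ∧ (∀ z, 0 ≤ RCLike.re (s'.P z - s.P z))

lemma core_step [LocallyCompactSpace X] [T2Space X]
    {B : ℕ → Set X} (hBopen : ∀ i, IsOpen (B i)) {nn : ℕ → ℕ}
    (hT : ∀ φ x, T φ x = φ (f x) * w x)
    {C : ℝ} (hC : ∀ x, ‖w x‖ ≤ C) (hC1 : 1 ≤ C)
    (hbig : ∀ R : ℝ, ∃ i q x, 0 < q ∧ f^[q] x ∈ B i ∧ R < ‖wn w f q x‖)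
    (hdecayB : ∀ i (ε : ℝ), 0 < ε → ∀ᶠ j in atTop, ∀ x,
      f^[nn j] x ∈ B i → ‖wn w f (nn j) x‖ ≤ ε)
    (Q : ZeroAtInftyContinuousMap X 𝕂)
    (hQ : Tendsto (fun j => ‖T^[nn j] Q‖) atTop (𝓝 0))
    (hQre : ∀ z, 0 ≤ RCLike.re (Q z))
    (Jprev : ℕ) (b : ℝ) (hb : 0 < b) :
    ∃ s' : LYS X 𝕂,
      0 < s'.m ∧ 0 < s'.c ∧ 1 ≤ s'.c * ‖wn w f s'.m s'.x‖ ∧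
      (∀ z, 0 ≤ RCLike.re (s'.P z)) ∧
      s'.c ≤ RCLike.re (s'.P (f^[s'.m] s'.x)) ∧
      ‖T^[nn s'.J] s'.P‖ ≤ b ∧
      Tendsto (fun j => ‖T^[nn j] s'.P‖) atTop (𝓝 0) ∧
      Jprev < s'.J ∧ s'.c * C ^ (nn Jprev) ≤ b ∧
      ‖s'.P - Q‖ ≤ s'.c ∧ (∀ z, 0 ≤ RCLike.re (s'.P z - Q z)) := by
  have hC0 : (0:ℝ) ≤ C := zero_le_one.trans hC1
  have hCpow : (0:ℝ) < C ^ (nn Jprev) := pow_pos (zero_lt_one.trans_le hC1) _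
  -- choose a large weight product
  obtain ⟨i, mm, xx, hmm, hmem, hV⟩ := hbig (max (C ^ (nn Jprev) / b) 0)
  set V := ‖wn w f mm xx‖ with hVdef
  have hVpos : (0:ℝ) < V := lt_of_le_of_lt (le_max_right _ _) hV
  set cc := 1 / V with hcc
  have hccpos : (0:ℝ) < cc := by positivity
  have hccV : cc * V = 1 := by rw [hcc]; field_simp
  have hccC : cc * C ^ (nn Jprev) ≤ b := by
    have h1 : C ^ (nn Jprev) / b < V := lt_of_le_of_lt (le_max_left _ _) hV
    rw [hcc, div_mul_eq_mul_div, one_mul, div_le_iff₀ hVpos]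
    rw [div_lt_iff₀ hb] at h1
    linarith
  -- bump function
  obtain ⟨ψ, g, hψg, hgIcc, hgy, hgsupp⟩ :=
    exists_bump (𝕂 := 𝕂) (hBopen i) hmem
  have hψnorm : ∀ z, ‖ψ z‖ ≤ 1 := by
    intro z
    rw [hψg z, RCLike.norm_ofReal, abs_le]
    exact ⟨by linarith [(hgIcc z).1], (hgIcc z).2⟩
  have hsmul_apply : ∀ z, (cc • ψ) z = ((cc * g z : ℝ) : 𝕂) := by
    intro z
    rw [ZeroAtInftyContinuousMap.smul_apply, hψg z]
    rw [RCLike.real_smul_eq_coe_mul]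
    push_cast
    ring
  set P := Q + cc • ψ with hP
  have hPQ : P - Q = cc • ψ := by rw [hP]; abel
  have hPQap : ∀ z, P z - Q z = ((cc * g z : ℝ) : 𝕂) := by
    intro z
    rw [hP, ZeroAtInftyContinuousMap.add_apply, hsmul_apply z]
    ring
  have hnormPQ : ‖P - Q‖ ≤ cc := by
    rw [hPQ]
    refine norm_le_of hccpos.le fun z => ?_
    rw [hsmul_apply z, RCLike.norm_ofReal, abs_mul, abs_of_pos hccpos]
    calc cc * |g z| ≤ cc * 1 := by
          refine mul_le_mul_of_nonneg_left ?_ hccpos.le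
          rw [abs_le]; exact ⟨by linarith [(hgIcc z).1], (hgIcc z).2⟩
      _ = cc := mul_one _
  have hrePQ : ∀ z, 0 ≤ RCLike.re (P z - Q z) := by
    intro z
    rw [hPQap z, RCLike.ofReal_re]
    exact mul_nonneg hccpos.le (hgIcc z).1
  have hreP : ∀ z, 0 ≤ RCLike.re (P z) := by
    intro z
    have : RCLike.re (P z) = RCLike.re (Q z) + RCLike.re (P z - Q z) := by
      rw [← map_add]; congr 1; ring
    rw [this]
    exact add_nonneg (hQre z) (hrePQ z)
  have hrePy : cc ≤ RCLike.re (P (f^[mm] xx)) := by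
    have h1 : RCLike.re (P (f^[mm] xx)) =
        RCLike.re (Q (f^[mm] xx)) + RCLike.re (P (f^[mm] xx) - Q (f^[mm] xx)) := by
      rw [← map_add]; congr 1; ring
    rw [h1, hPQap _, RCLike.ofReal_re, hgy, mul_one]
    linarith [hQre (f^[mm] xx)]
  -- decay of the new partial sum
  have hψdecay : Tendsto (fun j => ‖T^[nn j] (cc • ψ)‖) atTop (𝓝 0) := by
    rw [NormedAddCommGroup.tendsto_nhds_zero]
    intro ε hε
    have hε' : (0:ℝ) < ε / (2 * (cc + 1)) := by positivity
    refine (hdecayB i _ hε').mono fun j hj => ?_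
    have hsupp : ∀ z, z ∉ B i → (cc • ψ) z = 0 := by
      intro z hz
      rw [hsmul_apply z, hgsupp z hz, mul_zero]
      exact RCLike.ofReal_zero
    have hb1 : ‖T^[nn j] (cc • ψ)‖ ≤ ‖cc • ψ‖ * (ε / (2 * (cc + 1))) :=
      norm_iter_le_of_supp hT hsupp hε'.le hj
    have hb2 : ‖cc • ψ‖ ≤ cc := by rw [← hPQ]; exact hnormPQ
    have hb3 : ‖T^[nn j] (cc • ψ)‖ ≤ cc * (ε / (2 * (cc + 1))) :=
      le_trans hb1 (mul_le_mul_of_nonneg_right hb2 hε'.le)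
    rw [Real.norm_eq_abs, abs_of_nonneg (norm_nonneg _)]
    calc ‖T^[nn j] (cc • ψ)‖ ≤ cc * (ε / (2 * (cc + 1))) := hb3
      _ < ε := by
          rw [mul_div_assoc']
          rw [div_lt_iff₀ (by positivity)]
          nlinarith
  have hPdecay : Tendsto (fun j => ‖T^[nn j] P‖) atTop (𝓝 0) := by
    have hsum : ∀ j, ‖T^[nn j] P‖ ≤ ‖T^[nn j] Q‖ + ‖T^[nn j] (cc • ψ)‖ := by
      intro j
      rw [hP, iter_add hT]
      exact norm_add_le _ _
    have hadd : Tendsto (fun j => ‖T^[nn j] Q‖ + ‖T^[nn j] (cc • ψ)‖)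
        atTop (𝓝 0) := by
      have := hQ.add hψdecay
      simpa using this
    exact squeeze_zero (fun j => norm_nonneg _) hsum hadd
  -- choose the new check time
  obtain ⟨JJ, hJJ1, hJJ2⟩ :=
    ((hPdecay.eventually_lt_const hb).and (eventually_gt_atTop Jprev)).exists
  exact ⟨⟨JJ, mm, xx, cc, P⟩, hmm, hccpos, by rw [← hVdef, hccV], hreP, hrePy,
    hJJ1.le, hPdecay, hJJ2, hccC, hnormPQ, hrePQ⟩

end Bwd

section Bwd2
variable {𝕂 : Type} [RCLike 𝕂] {X : Type} [TopologicalSpace X]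
variable {w : X → 𝕂} {f : X → X}
variable {T : ZeroAtInftyContinuousMap X 𝕂 → ZeroAtInftyContinuousMap X 𝕂}

lemma exists_semiIrregular [LocallyCompactSpace X] [T2Space X]
    {B : ℕ → Set X} (hBopen : ∀ i, IsOpen (B i)) {nn : ℕ → ℕ}
    (hnmono : StrictMono nn)
    (hT : ∀ φ x, T φ x = φ (f x) * w x)
    {C : ℝ} (hC : ∀ x, ‖w x‖ ≤ C) (hC1 : 1 ≤ C)
    (hbig : ∀ R : ℝ, ∃ i q x, 0 < q ∧ f^[q] x ∈ B i ∧ R < ‖wn w f q x‖)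
    (hdecayB : ∀ i (ε : ℝ), 0 < ε → ∀ᶠ j in atTop, ∀ x,
      f^[nn j] x ∈ B i → ‖wn w f (nn j) x‖ ≤ ε) :
    ∃ φ : ZeroAtInftyContinuousMap X 𝕂,
      (∀ ε : ℝ, 0 < ε → ∃ᶠ N in atTop, ‖T^[N] φ‖ < ε) ∧
      (∃ δ : ℝ, 0 < δ ∧ ∃ᶠ N in atTop, δ ≤ ‖T^[N] φ‖) := by
  have hC0 : (0:ℝ) ≤ C := zero_le_one.trans hC1
  -- base state
  have hzero : Tendsto (fun j => ‖T^[nn j] (0 : ZeroAtInftyContinuousMap X 𝕂)‖)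
      atTop (𝓝 0) := by
    have he : ∀ j : ℕ, ‖T^[nn j] (0 : ZeroAtInftyContinuousMap X 𝕂)‖ = 0 :=
      fun j => by rw [iter_zero' hT, norm_zero]
    exact (tendsto_const_nhds : Tendsto (fun _ : ℕ => (0:ℝ)) atTop (𝓝 0)).congr
      (fun j => (he j).symm)
  have hbase : ∃ s : LYS X 𝕂, Inv w f T nn 0 s := by
    obtain ⟨s, h1, h2, h3, h4, h5, h6, h7, _, _, _, _⟩ :=
      core_step hBopen hT hC hC1 hbig hdecayB 0 hzero
        (fun z => by simp) 0 1 one_pos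
    exact ⟨s, h1, h2, h3, h4, h5, by simpa using h6, h7⟩
  -- recursion step
  have hstep : ∀ (k : ℕ) (s : LYS X 𝕂), Inv w f T nn k s →
      ∃ s', Inv w f T nn (k+1) s' ∧ Link C nn k s s' := by
    intro k s hs
    obtain ⟨h1, h2, h3, h4, h5, h6, h7⟩ := hs
    obtain ⟨s', g1, g2, g3, g4, g5, g6, g7, g8, g9, g10, g11⟩ :=
      core_step hBopen hT hC hC1 hbig hdecayB s.P h7 h4 s.J
        ((1/2:ℝ)^(k+1)) (by positivity)
    exact ⟨s', ⟨g1, g2, g3, g4, g5, g6, g7⟩, g8, g9, g10, g11⟩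
  -- build the sequence
  let seq : ∀ k : ℕ, {s : LYS X 𝕂 // Inv w f T nn k s} := fun k =>
    Nat.rec ⟨hbase.choose, hbase.choose_spec⟩
      (fun k prev => ⟨(hstep k prev.1 prev.2).choose,
        (hstep k prev.1 prev.2).choose_spec.1⟩) k
  have hLink : ∀ k, Link C nn k (seq k).1 (seq (k+1)).1 := by
    intro k
    exact (hstep k (seq k).1 (seq k).2).choose_spec.2
  set P : ℕ → ZeroAtInftyContinuousMap X 𝕂 := fun k => (seq k).1.P with hPdef
  have hInv : ∀ k, Inv w f T nn k (seq k).1 := fun k => (seq k).2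
  -- basic consequences
  have hCpow1 : ∀ q : ℕ, (1:ℝ) ≤ C ^ q := fun q => one_le_pow₀ hC1
  have hcbound : ∀ k, (seq (k+1)).1.c ≤ (1/2:ℝ)^(k+1) := by
    intro k
    have h := (hLink k).2.1
    calc (seq (k+1)).1.c = (seq (k+1)).1.c * 1 := by ring
      _ ≤ (seq (k+1)).1.c * C ^ (nn (seq k).1.J) :=
        mul_le_mul_of_nonneg_left (hCpow1 _) (hInv (k+1)).2.1.le
      _ ≤ (1/2:ℝ)^(k+1) := h
  have hdist : ∀ k, dist (P k) (P (k+1)) ≤ (1/2:ℝ) * (1/2:ℝ)^k := by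
    intro k
    rw [dist_eq_norm, norm_sub_rev]
    calc ‖P (k+1) - P k‖ ≤ (seq (k+1)).1.c := (hLink k).2.2.1
      _ ≤ (1/2:ℝ)^(k+1) := hcbound k
      _ = (1/2:ℝ) * (1/2:ℝ)^k := by rw [pow_succ]; ring
  have hcauchy : CauchySeq P :=
    cauchySeq_of_le_geometric (1/2:ℝ) (1/2:ℝ) (by norm_num) hdist
  obtain ⟨φ, hφ⟩ := cauchySeq_tendsto_of_complete hcauchy
  -- J is strictly monotone
  have hJmono : StrictMono (fun k => (seq k).1.J) :=
    strictMono_nat_of_lt_succ (fun k => (hLink k).1)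
  set t : ℕ → ℕ := fun k => nn ((seq k).1.J) with htdef
  have htmono : StrictMono t := fun a b hab => hnmono (hJmono hab)
  -- tail bound with operator norm factor
  have hkey : ∀ k d : ℕ, C ^ (t k) * ‖P (k+d) - P k‖ ≤ (1/2:ℝ)^k - (1/2:ℝ)^(k+d) := by
    intro k d
    induction d with
    | zero =>
        have hz : P (k+0) - P k = 0 := by rw [Nat.add_zero]; exact sub_self _
        rw [hz, norm_zero, mul_zero, Nat.add_zero, sub_self]
    | succ d ih =>
        have htri : ‖P (k+(d+1)) - P k‖ ≤ ‖P (k+(d+1)) - P (k+d)‖ + ‖P (k+d) - P k‖ := by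
          have : P (k+(d+1)) - P k = (P (k+(d+1)) - P (k+d)) + (P (k+d) - P k) := by abel
          rw [this]; exact norm_add_le _ _
        have hCt : (0:ℝ) < C ^ (t k) := pow_pos (zero_lt_one.trans_le hC1) _
        have hstep1 : C ^ (t k) * ‖P (k+(d+1)) - P (k+d)‖ ≤ (1/2:ℝ)^(k+d+1) := by
          have h1 : ‖P (k+(d+1)) - P (k+d)‖ ≤ (seq (k+d+1)).1.c := (hLink (k+d)).2.2.1
          have h2 : (seq (k+d+1)).1.c * C ^ (nn ((seq (k+d)).1.J)) ≤ (1/2:ℝ)^(k+d+1) :=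
            (hLink (k+d)).2.1
          have h3 : C ^ (t k) ≤ C ^ (nn ((seq (k+d)).1.J)) := by
            refine pow_le_pow_right₀ hC1 ?_
            exact hnmono.monotone (hJmono.monotone (Nat.le_add_right k d))
          calc C ^ (t k) * ‖P (k+(d+1)) - P (k+d)‖
              ≤ C ^ (nn ((seq (k+d)).1.J)) * (seq (k+d+1)).1.c := by
                refine mul_le_mul h3 ?_ (norm_nonneg _) (by positivity)
                exact h1.trans (le_of_eq rfl)
            _ = (seq (k+d+1)).1.c * C ^ (nn ((seq (k+d)).1.J)) := by ring
            _ ≤ (1/2:ℝ)^(k+d+1) := h2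
        have hfin : C ^ (t k) * ‖P (k+(d+1)) - P k‖
            ≤ (1/2:ℝ)^(k+d+1) + ((1/2:ℝ)^k - (1/2:ℝ)^(k+d)) := by
          calc C ^ (t k) * ‖P (k+(d+1)) - P k‖
              ≤ C ^ (t k) * (‖P (k+(d+1)) - P (k+d)‖ + ‖P (k+d) - P k‖) :=
                mul_le_mul_of_nonneg_left htri hCt.le
            _ = C ^ (t k) * ‖P (k+(d+1)) - P (k+d)‖ + C ^ (t k) * ‖P (k+d) - P k‖ := by
                ring
            _ ≤ (1/2:ℝ)^(k+d+1) + ((1/2:ℝ)^k - (1/2:ℝ)^(k+d)) := add_le_add hstep1 ih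
        have heq : (1/2:ℝ)^(k+d+1) + ((1/2:ℝ)^k - (1/2:ℝ)^(k+d))
            = (1/2:ℝ)^k - (1/2:ℝ)^(k+(d+1)) := by
          have e1 : (1/2:ℝ)^(k+d+1) = (1/2:ℝ)^(k+d) * (1/2) := by rw [pow_succ]
          have e2 : (1/2:ℝ)^(k+(d+1)) = (1/2:ℝ)^(k+d) * (1/2) := by
            rw [show k+(d+1) = (k+d)+1 by ring, pow_succ]
          rw [e1, e2]; ring
        rw [show k+(d+1) = k+(d+1) from rfl] at hfin
        linarith [hfin, le_of_eq heq]
  have hφk : ∀ k, C ^ (t k) * ‖φ - P k‖ ≤ (1/2:ℝ)^k := by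
    intro k
    have hlim : Tendsto (fun d => C ^ (t k) * ‖P (k+d) - P k‖) atTop
        (𝓝 (C ^ (t k) * ‖φ - P k‖)) := by
      have h1 : Tendsto (fun d => P (k+d)) atTop (𝓝 φ) := by
        have h0 : Tendsto (fun d : ℕ => P (d + k)) atTop (𝓝 φ) :=
          hφ.comp (tendsto_add_atTop_nat k)
        exact h0.congr (fun d => by rw [Nat.add_comm])
      have h2 : Tendsto (fun d => P (k+d) - P k) atTop (𝓝 (φ - P k)) :=
        h1.sub_const (P k)
      exact (h2.norm.const_mul _)
    refine le_of_tendsto hlim (Filter.Eventually.of_forall fun d => ?_)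
    calc C ^ (t k) * ‖P (k+d) - P k‖ ≤ (1/2:ℝ)^k - (1/2:ℝ)^(k+d) := hkey k d
      _ ≤ (1/2:ℝ)^k := by
          have : (0:ℝ) ≤ (1/2:ℝ)^(k+d) := by positivity
          linarith
  refine ⟨φ, ?_, 1, one_pos, ?_⟩
  · -- liminf along check times t k
    intro ε hε
    rw [frequently_atTop]
    intro a
    obtain ⟨k₀, hk₀⟩ := exists_pow_lt_of_lt_one (show (0:ℝ) < ε/2 by positivity)
      (by norm_num : (1/2:ℝ) < 1)
    set k := max a k₀
    refine ⟨t k, le_trans (le_max_left a k₀) (le_trans (htmono.le_apply) ?_), ?_⟩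
    · exact le_refl _
    · have hbound : ‖T^[t k] φ‖ ≤ (1/2:ℝ)^k + (1/2:ℝ)^k := by
        have hdecomp : T^[t k] φ = T^[t k] (P k) + T^[t k] (φ - P k) := by
          rw [← iter_add hT]
          congr 1
          abel
        have h1 : ‖T^[t k] (P k)‖ ≤ (1/2:ℝ)^k := (hInv k).2.2.2.2.2.1
        have h2 : ‖T^[t k] (φ - P k)‖ ≤ C ^ (t k) * ‖φ - P k‖ :=
          norm_iter_le hT hC hC0 _ _
        calc ‖T^[t k] φ‖ ≤ ‖T^[t k] (P k)‖ + ‖T^[t k] (φ - P k)‖ := by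
              rw [hdecomp]; exact norm_add_le _ _
          _ ≤ (1/2:ℝ)^k + (1/2:ℝ)^k := add_le_add h1 (h2.trans (hφk k))
      have hk : (1/2:ℝ)^k ≤ (1/2:ℝ)^k₀ :=
        pow_le_pow_of_le_one (by norm_num) (by norm_num) (le_max_right a k₀)
      calc ‖T^[t k] φ‖ ≤ (1/2:ℝ)^k + (1/2:ℝ)^k := hbound
        _ ≤ (1/2:ℝ)^k₀ + (1/2:ℝ)^k₀ := add_le_add hk hk
        _ < ε/2 + ε/2 := add_lt_add hk₀ hk₀
        _ = ε := by ring
  · -- limsup : big at times m_k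
    -- monotonicity of re along the sequence, pointwise
    have hre_mono : ∀ (zz : X) (k d : ℕ),
        RCLike.re (P k zz) ≤ RCLike.re (P (k+d) zz) := by
      intro zz k d
      induction d with
      | zero => exact le_refl _
      | succ d ih =>
          have h4 := (hLink (k+d)).2.2.2 zz
          have : RCLike.re (P (k+d+1) zz - P (k+d) zz)
              = RCLike.re (P (k+d+1) zz) - RCLike.re (P (k+d) zz) := map_sub _ _ _
          rw [this] at h4
          have : RCLike.re (P (k+d) zz) ≤ RCLike.re (P (k+d+1) zz) := by linarith
          calc RCLike.re (P k zz) ≤ RCLike.re (P (k+d) zz) := ih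
            _ ≤ RCLike.re (P (k+(d+1)) zz) := by
                rw [show k+(d+1) = k+d+1 by ring]; exact this
    -- pointwise convergence
    have hpt : ∀ zz : X, Tendsto (fun K => P K zz) atTop (𝓝 (φ zz)) := by
      intro zz
      rw [tendsto_iff_dist_tendsto_zero]
      refine squeeze_zero (fun K => dist_nonneg) (fun K => ?_)
        (tendsto_iff_dist_tendsto_zero.1 hφ)
      rw [dist_eq_norm, dist_eq_norm]
      have : P K zz - φ zz = (P K - φ) zz := by
        rw [ZeroAtInftyContinuousMap.sub_apply]
      rw [this]
      exact apply_le_norm _ _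
    have hre_phi : ∀ k, (seq k).1.c ≤ RCLike.re (φ (f^[(seq k).1.m] (seq k).1.x)) := by
      intro k
      set y := f^[(seq k).1.m] (seq k).1.x
      have hconv : Tendsto (fun K => RCLike.re (P K y)) atTop (𝓝 (RCLike.re (φ y))) :=
        (RCLike.continuous_re.tendsto _).comp (hpt y)
      refine le_of_tendsto_of_tendsto tendsto_const_nhds hconv ?_
      rw [Filter.EventuallyLE, eventually_atTop]
      refine ⟨k, fun K hK => ?_⟩
      obtain ⟨d, rfl⟩ := Nat.exists_eq_add_of_le hK
      calc (seq k).1.c ≤ RCLike.re (P k y) := (hInv k).2.2.2.2.1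
        _ ≤ RCLike.re (P (k+d) y) := hre_mono y k d
    -- the big times go to infinity
    have hClt : (1:ℝ) < C := by
      by_contra hc
      push_neg at hc
      have hCeq : C = 1 := le_antisymm hc hC1
      have h3 := (hInv 1).2.2.1
      have hc1 : (seq 1).1.c ≤ (1/2:ℝ)^1 := hcbound 0
      have hV : ‖wn w f (seq 1).1.m (seq 1).1.x‖ ≤ C ^ (seq 1).1.m :=
        norm_wn_le hC hC0 _ _
      rw [hCeq, one_pow] at hV
      nlinarith [(hInv 1).2.1]
    have hmbig : ∀ a : ℕ, ∃ k, 0 < k ∧ a < (seq k).1.m := by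
      intro a
      obtain ⟨k₀, hk₀⟩ := pow_unbounded_of_one_lt (C ^ a) (one_lt_two (α := ℝ))
      refine ⟨max 1 k₀, lt_of_lt_of_le one_pos (le_max_left _ _), ?_⟩
      set k := max 1 k₀
      have h3 := (hInv k).2.2.1
      have hck : (seq k).1.c ≤ (1/2:ℝ)^k := by
        have hkpos : 0 < k := lt_of_lt_of_le one_pos (le_max_left 1 k₀)
        obtain ⟨k', hk'⟩ := Nat.exists_eq_succ_of_ne_zero hkpos.ne'
        rw [hk']
        exact hcbound k'
      have hV : ‖wn w f (seq k).1.m (seq k).1.x‖ ≤ C ^ (seq k).1.m :=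
        norm_wn_le hC hC0 _ _
      have h2k : (2:ℝ)^k ≤ ‖wn w f (seq k).1.m (seq k).1.x‖ := by
        have hcpos := (hInv k).2.1
        have : (1:ℝ) ≤ (seq k).1.c * ‖wn w f (seq k).1.m (seq k).1.x‖ := h3
        have hc2 : (seq k).1.c ≤ (1/2:ℝ)^k := hck
        have hwpos : (0:ℝ) ≤ ‖wn w f (seq k).1.m (seq k).1.x‖ := norm_nonneg _
        have h5 : (1:ℝ) ≤ (1/2:ℝ)^k * ‖wn w f (seq k).1.m (seq k).1.x‖ :=
          le_trans this (mul_le_mul_of_nonneg_right hc2 hwpos)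
        have e : (2:ℝ)^k * (1/2:ℝ)^k = 1 := by
          rw [← mul_pow]; norm_num
        calc (2:ℝ)^k = (2:ℝ)^k * 1 := by ring
          _ ≤ (2:ℝ)^k * ((1/2:ℝ)^k * ‖wn w f (seq k).1.m (seq k).1.x‖) :=
              mul_le_mul_of_nonneg_left h5 (by positivity)
          _ = ((2:ℝ)^k * (1/2:ℝ)^k) * ‖wn w f (seq k).1.m (seq k).1.x‖ := by ring
          _ = ‖wn w f (seq k).1.m (seq k).1.x‖ := by rw [e, one_mul]
      have hCa : C ^ a < C ^ (seq k).1.m := by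
        calc C ^ a < (2:ℝ)^k₀ := hk₀
          _ ≤ (2:ℝ)^k := pow_le_pow_right₀ (by norm_num) (le_max_right _ _)
          _ ≤ ‖wn w f (seq k).1.m (seq k).1.x‖ := h2k
          _ ≤ C ^ (seq k).1.m := hV
      exact (pow_lt_pow_iff_right₀ hClt).1 hCa
    rw [frequently_atTop]
    intro a
    obtain ⟨k, hk0, hka⟩ := hmbig a
    refine ⟨(seq k).1.m, hka.le, ?_⟩
    have hlow : ‖φ (f^[(seq k).1.m] (seq k).1.x)‖ * ‖wn w f (seq k).1.m (seq k).1.x‖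
        ≤ ‖T^[(seq k).1.m] φ‖ := le_norm_iter hT _ φ _
    have hre : (seq k).1.c ≤ ‖φ (f^[(seq k).1.m] (seq k).1.x)‖ :=
      le_trans (hre_phi k) (RCLike.re_le_norm _)
    calc (1:ℝ) ≤ (seq k).1.c * ‖wn w f (seq k).1.m (seq k).1.x‖ := (hInv k).2.2.1
      _ ≤ ‖φ (f^[(seq k).1.m] (seq k).1.x)‖ * ‖wn w f (seq k).1.m (seq k).1.x‖ :=
          mul_le_mul_of_nonneg_right hre (norm_nonneg _)
      _ ≤ ‖T^[(seq k).1.m] φ‖ := hlow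

end Bwd2

end WCLY

theorem weighted_composition_C0_liYorke_iff
    {𝕂 : Type} [RCLike 𝕂] {X : Type} [TopologicalSpace X]
    [LocallyCompactSpace X] [T2Space X]
    (w : X → 𝕂) (hwc : Continuous w) (hwb : ∃ C : ℝ, ∀ x, ‖w x‖ ≤ C)
    (f : X → X) (hfc : Continuous f)
    (hf : ∀ ε : ℝ, 0 < ε → ∀ K : Set X, IsCompact K →
      IsCompact (f ⁻¹' K ∩ {x | ε ≤ ‖w x‖}))
    (T : ZeroAtInftyContinuousMap X 𝕂 → ZeroAtInftyContinuousMap X 𝕂)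
    (hT : ∀ φ x, T φ x = φ (f x) * w x) :
    LiYorkeChaotic T ↔
      ∃ B : ℕ → Set X,
        (∀ i, IsOpen (B i) ∧ IsCompact (closure (B i))) ∧
        (∃ n : ℕ → ℕ, StrictMono n ∧ (∀ j, 0 < n j) ∧
          ∀ i, Tendsto
            (fun j => ⨆ x ∈ (f^[n j]) ⁻¹' (B i),
              (‖∏ t ∈ Finset.range (n j), w (f^[t] x)‖₊ : ℝ≥0∞))
            atTop (nhds 0)) ∧
        (⨆ (i : ℕ) (n : ℕ) (_ : 0 < n), ⨆ x ∈ (f^[n]) ⁻¹' (B i),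
            (‖∏ t ∈ Finset.range n, w (f^[t] x)‖₊ : ℝ≥0∞)) = ⊤ := by
  obtain ⟨C₁, hC₁⟩ := hwb
  set C := max C₁ 1 with hCdef
  have hC : ∀ x, ‖w x‖ ≤ C := fun x => le_trans (hC₁ x) (le_max_left _ _)
  have hC1 : (1:ℝ) ≤ C := le_max_right _ _
  constructor
  · intro hLY
    exact WCLY.forward_direction hwc hfc hf hC hC1 hT hLY
  · rintro ⟨B, hB, ⟨nseq, hmono, hpos, hA⟩, htop⟩
    have hbig : ∀ R : ℝ, ∃ i q x, 0 < q ∧ f^[q] x ∈ B i ∧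
        R < ‖WCLY.wn w f q x‖ :=
      (WCLY.sup_eq_top_iff_unbounded).1 htop
    have hdecayB : ∀ i (ε : ℝ), 0 < ε → ∀ᶠ j in Filter.atTop, ∀ x,
        f^[nseq j] x ∈ B i → ‖WCLY.wn w f (nseq j) x‖ ≤ ε :=
      fun i ε hε => WCLY.eventually_small_of_tendsto_sup (hA i) hε
    obtain ⟨φ, hsm, hbg⟩ := WCLY.exists_semiIrregular (fun i => (hB i).1) hmono
      hT hC hC1 hbig hdecayB
    exact WCLY.liYorke_of_semiIrregular hT φ hsm hbg
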